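/- The p-core of a partition is well-defined: if two sequences of rim p-hook removals from a partition λ both terminate in partitions from which no rim p-hook can be removed, then the two resulting partitions are equal. -/
import Mathlib


/-- Two cells are adjacent if they share an edge. -/
def Adj (a b : ℕ × ℕ) : Prop :=
  (a.1 = b.1 ∧ (a.2 = b.2 + 1 ∨ b.2 = a.2 + 1)) ∨
  (a.2 = b.2 ∧ (a.1 = b.1 + 1 ∨ b.1 = a.1 + 1))

/-- A set of cells is connected under edge-adjacency. -/
def ConnectedCells (S : Finset (ℕ × ℕ)) : Prop :=
  ∀ a ∈ S, ∀ b ∈ S, Relation.ReflTransGen (fun x y => y ∈ S ∧ Adj x y) a b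

/-- The rim of a Young diagram: cells `(i,j)` with `(i+1,j+1)` not in the diagram. -/
def YoungDiagram.rim (μ : YoungDiagram) : Finset (ℕ × ℕ) :=
  μ.cells.filter fun c => (c.1 + 1, c.2 + 1) ∉ μ.cells

/-- `ν` is obtained from `μ` by removing a rim `p`-hook. -/
def IsRimHookRemoval (p : ℕ) (μ ν : YoungDiagram) : Prop :=
  ν.cells ⊆ μ.cells ∧ (μ.cells \ ν.cells).card = p ∧
    (μ.cells \ ν.cells) ⊆ μ.rim ∧ ConnectedCells (μ.cells \ ν.cells)

/-- A partition is a `p`-core if no rim `p`-hook can be removed. -/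
def IsPCore (p : ℕ) (μ : YoungDiagram) : Prop :=
  ¬ ∃ ν : YoungDiagram, IsRimHookRemoval p μ ν

/-- `c` is the `p`-core of `μ`. -/
def IsPCoreOf (p : ℕ) (μ c : YoungDiagram) : Prop :=
  Relation.ReflTransGen (IsRimHookRemoval p) μ c ∧ IsPCore p c

/-- The `r`-staircase Young diagram `(r, r-1, …, 2, 1)`. -/
def staircase (r : ℕ) : YoungDiagram where
  cells := (Finset.range r ×ˢ Finset.range r).filter fun c => c.1 + c.2 < r
  isLowerSet := by
    intro a b hba ha
    simp only [Finset.coe_filter, Set.mem_setOf_eq, Finset.mem_product,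
      Finset.mem_range] at ha ⊢
    obtain ⟨hb1, hb2⟩ := hba
    exact ⟨⟨lt_of_le_of_lt hb1 ha.1.1, lt_of_le_of_lt hb2 ha.1.2⟩, by omega⟩


namespace PCoreAux

open Finset

/-- Membership in a set-difference of Young diagrams, in terms of row lengths. -/
lemma mem_sdiff_iff {μ ν : YoungDiagram} {k c : ℕ} :
    (k, c) ∈ μ.cells \ ν.cells ↔ ν.rowLen k ≤ c ∧ c < μ.rowLen k := by
  simp [Finset.mem_sdiff, YoungDiagram.mem_cells, YoungDiagram.mem_iff_lt_rowLen]
  tauto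

lemma rowLen_le_of_le {μ ν : YoungDiagram} (h : ν.cells ⊆ μ.cells) (k : ℕ) :
    ν.rowLen k ≤ μ.rowLen k := by
  rcases Nat.eq_zero_or_pos (ν.rowLen k) with h0 | h0
  · omega
  · have : (k, ν.rowLen k - 1) ∈ ν := by rw [YoungDiagram.mem_iff_lt_rowLen]; omega
    have : (k, ν.rowLen k - 1) ∈ μ := by
      rw [← YoungDiagram.mem_cells] at this ⊢; exact h this
    rw [YoungDiagram.mem_iff_lt_rowLen] at this; omega

/-- A downward-closed finset of naturals is an initial segment. -/
lemma dc_eq_range (T : Finset ℕ) (h : ∀ t, t + 1 ∈ T → t ∈ T) :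
    T = Finset.range T.card := by
  have hdown : ∀ t ∈ T, ∀ s, s ≤ t → s ∈ T := by
    intro t ht s hs
    induction t with
    | zero => simpa [Nat.le_zero.mp hs] using ht
    | succ n ih =>
      rcases Nat.eq_or_lt_of_le hs with rfl | hlt
      · exact ht
      · exact ih (h n ht) (by omega)
  rcases T.eq_empty_or_nonempty with rfl | hne
  · simp
  · have hmax := T.max'_mem hne
    have hsub : T ⊆ Finset.Iic (T.max' hne) := fun x hx => by
      simp [Finset.mem_Iic]; exact T.le_max' x hx
    have hsub' : Finset.Iic (T.max' hne) ⊆ T := fun x hx => by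
      simp [Finset.mem_Iic] at hx; exact hdown _ hmax x hx
    have : T = Finset.Iic (T.max' hne) := Finset.Subset.antisymm hsub hsub'
    rw [this, Nat.card_Iic]
    ext x
    simp [Nat.lt_succ_iff]

section Paths

variable {S : Finset (ℕ × ℕ)}

local notation "r" => (fun x y => y ∈ S ∧ Adj x y)

lemma path_mem {a b : ℕ × ℕ} (h : Relation.ReflTransGen (fun x y => y ∈ S ∧ Adj x y) a b)
    (ha : a ∈ S) : b ∈ S := by
  induction h with
  | refl => exact ha
  | tail _ hstep _ => exact hstep.1

lemma adj_symm {a b : ℕ × ℕ} (h : Adj a b) : Adj b a := by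
  unfold Adj at *; tauto

lemma path_rev {a b : ℕ × ℕ} (h : Relation.ReflTransGen (fun x y => y ∈ S ∧ Adj x y) a b)
    (ha : a ∈ S) : Relation.ReflTransGen (fun x y => y ∈ S ∧ Adj x y) b a := by
  induction h with
  | refl => exact Relation.ReflTransGen.refl
  | @tail b' c hab' hstep ih =>
    have hb' : b' ∈ S := path_mem hab' ha
    exact Relation.ReflTransGen.trans
      (Relation.ReflTransGen.single ⟨hb', adj_symm hstep.2⟩) ih

lemma adj_row {a b : ℕ × ℕ} (h : Adj a b) : b.1 ≤ a.1 + 1 ∧ a.1 ≤ b.1 + 1 := by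
  unfold Adj at h; omega

lemma path_row_ivl {a b : ℕ × ℕ} (h : Relation.ReflTransGen (fun x y => y ∈ S ∧ Adj x y) a b)
    (ha : a ∈ S) : ∀ l, a.1 ≤ l → l ≤ b.1 → ∃ c, (l, c) ∈ S := by
  induction h with
  | refl =>
    intro l h1 h2
    have : l = a.1 := by omega
    subst this
    exact ⟨a.2, by simpa using ha⟩
  | @tail b' c hab' hstep ih =>
    intro l h1 h2
    by_cases hl : l ≤ b'.1
    · exact ih l h1 hl
    · have := adj_row hstep.2
      have : l = c.1 := by omega
      subst this
      exact ⟨c.2, by simpa using hstep.1⟩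

lemma path_cross {a b : ℕ × ℕ} (h : Relation.ReflTransGen (fun x y => y ∈ S ∧ Adj x y) a b)
    (ha : a ∈ S) : ∀ k, a.1 ≤ k → k + 1 ≤ b.1 → ∃ c, (k, c) ∈ S ∧ (k + 1, c) ∈ S := by
  induction h with
  | refl => intro k h1 h2; omega
  | @tail b' c hab' hstep ih =>
    intro k h1 h2
    by_cases hk : k + 1 ≤ b'.1
    · exact ih k h1 hk
    · have hadj := hstep.2
      have hrow := adj_row hadj
      have hb1 : b'.1 = k := by omega
      have hc1 : c.1 = k + 1 := by omega
      have hb' : b' ∈ S := path_mem hab' ha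
      have hcol : b'.2 = c.2 := by unfold Adj at hadj; omega
      refine ⟨b'.2, ?_, ?_⟩
      · have : (b'.1, b'.2) = (k, b'.2) := by rw [hb1]
        simpa [← hb1] using hb'
      · have : (c.1, c.2) = (k+1, b'.2) := by rw [hc1, hcol]
        simpa [← hc1, hcol] using hstep.1

end Paths

end PCoreAux

namespace PCoreAux

open Finset

/-- Beta numbers with `N` rows. -/
def beta (N : ℕ) (μ : YoungDiagram) (k : ℕ) : ℕ := μ.rowLen k + (N - 1 - k)

def betaSet (N : ℕ) (μ : YoungDiagram) : Finset ℕ := (Finset.range N).image (beta N μ)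

lemma beta_strict {N : ℕ} (μ : YoungDiagram) {k l : ℕ} (hkl : k < l) (hl : l < N) :
    beta N μ l < beta N μ k := by
  have := μ.rowLen_anti k l (le_of_lt hkl)
  unfold beta; omega

lemma beta_inj {N : ℕ} (μ : YoungDiagram) {k l : ℕ} (hk : k < N) (hl : l < N)
    (h : beta N μ k = beta N μ l) : k = l := by
  rcases lt_trichotomy k l with h' | h' | h'
  · have := beta_strict μ h' hl; omega
  · exact h'
  · have := beta_strict μ h' hk; omega

/-- `μ` has fewer than `N` rows. -/
def Bnd (N : ℕ) (μ : YoungDiagram) : Prop := ∀ k, N - 1 ≤ k → μ.rowLen k = 0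

lemma Bnd.mono {N : ℕ} {μ ν : YoungDiagram} (h : Bnd N μ) (hsub : ν.cells ⊆ μ.cells) :
    Bnd N ν := fun k hk => by have := rowLen_le_of_le hsub k; have := h k hk; omega

lemma card_eq_sum {N : ℕ} {μ : YoungDiagram} (h : Bnd N μ) :
    μ.cells.card = ∑ k ∈ Finset.range N, μ.rowLen k := by
  have hcells : μ.cells = (Finset.range N).biUnion (fun k => μ.row k) := by
    ext ⟨k, c⟩
    simp only [Finset.mem_biUnion, Finset.mem_range, YoungDiagram.mem_row_iff]
    constructor
    · intro hm
      refine ⟨k, ?_, by simpa [YoungDiagram.mem_cells] using hm, rfl⟩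
      by_contra hk
      have := h k (by omega)
      rw [YoungDiagram.mem_cells, YoungDiagram.mem_iff_lt_rowLen] at hm
      omega
    · rintro ⟨l, _, hm, rfl⟩
      simpa [YoungDiagram.mem_cells] using hm
  rw [hcells, Finset.card_biUnion]
  · exact Finset.sum_congr rfl fun k _ => (μ.rowLen_eq_card).symm
  · intro x _ y _ hxy
    simp only [Finset.disjoint_left, YoungDiagram.mem_row_iff]
    rintro ⟨a, b⟩ ⟨_, rfl⟩ ⟨_, h2⟩
    exact hxy h2

lemma tele (f g : ℕ → ℕ) (i : ℕ) : ∀ d, (∀ k, i ≤ k → k < i + d → f (k + 1) = g k + 1) →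
    (∑ k ∈ Finset.Icc i (i + d), f k) + g (i + d)
      = (∑ k ∈ Finset.Icc i (i + d), g k) + f i + d := by
  intro d
  induction d with
  | zero => intro _; simp; omega
  | succ d ih =>
    intro hmid
    have h1 : i ≤ i + d + 1 := by omega
    have e1 : i + (d + 1) = (i + d) + 1 := by omega
    rw [e1, Finset.sum_Icc_succ_top h1 f, Finset.sum_Icc_succ_top h1 g]
    have ihh := ih (fun k hk hk' => hmid k hk (by omega))
    have hm := hmid (i + d) (by omega) (by omega)
    omega

/-- Key summation identity for hook shapes. -/
lemma sum_key {f g : ℕ → ℕ} {i j N : ℕ} (hij : i ≤ j) (hjN : j < N)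
    (hoff : ∀ k, k < i ∨ j < k → f k = g k)
    (hmid : ∀ k, i ≤ k → k < j → f (k + 1) = g k + 1) :
    (∑ k ∈ Finset.range N, f k) + g j = (∑ k ∈ Finset.range N, g k) + f i + (j - i) := by
  have hIcc : ∀ h : ℕ → ℕ, ∑ k ∈ Finset.range N, h k
      = (∑ k ∈ Finset.Icc i j, h k) + ∑ k ∈ (Finset.range N).filter (fun k => ¬(i ≤ k ∧ k ≤ j)), h k := by
    intro h
    rw [← Finset.sum_filter_add_sum_filter_not (Finset.range N) (fun k => i ≤ k ∧ k ≤ j) h]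
    congr 2
    ext x
    simp only [Finset.mem_filter, Finset.mem_range, Finset.mem_Icc]
    omega
  rw [hIcc f, hIcc g]
  have hout : ∑ k ∈ (Finset.range N).filter (fun k => ¬(i ≤ k ∧ k ≤ j)), f k
      = ∑ k ∈ (Finset.range N).filter (fun k => ¬(i ≤ k ∧ k ≤ j)), g k := by
    apply Finset.sum_congr rfl
    intro x hx
    simp only [Finset.mem_filter, Finset.mem_range] at hx
    exact hoff x (by omega)
  have := tele f g i (j - i) (fun k hk hk' => hmid k hk (by omega))
  have hd : i + (j - i) = j := by omega
  rw [hd] at this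
  omega

end PCoreAux


namespace PCoreAux

open Finset

theorem removal_beta {p N : ℕ} {μ ν : YoungDiagram} (hp : 0 < p) (hN : Bnd N μ)
    (h : IsRimHookRemoval p μ ν) :
    ∃ i, i < N ∧ p ≤ beta N μ i ∧ beta N μ i - p ∉ betaSet N μ ∧
      betaSet N ν = insert (beta N μ i - p) ((betaSet N μ).erase (beta N μ i)) := by
  obtain ⟨hsub, hcard, hrim, hconn⟩ := h
  set S := μ.cells \ ν.cells with hS
  have hle : ∀ k, ν.rowLen k ≤ μ.rowLen k := rowLen_le_of_le hsub
  -- the set of touched rows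
  set T : Finset ℕ := (Finset.range N).filter (fun k => ν.rowLen k < μ.rowLen k) with hT
  have hmemT : ∀ k, k ∈ T ↔ ν.rowLen k < μ.rowLen k := by
    intro k
    simp only [hT, Finset.mem_filter, Finset.mem_range]
    constructor
    · tauto
    · intro hk
      refine ⟨?_, hk⟩
      by_contra hkN
      have := hN k (by omega)
      omega
  have hTlt : ∀ k ∈ T, k < N - 1 := by
    intro k hk
    rw [hmemT] at hk
    by_contra hkN
    have := hN k (by omega)
    omega
  have hTne : T.Nonempty := by
    have : S.Nonempty := Finset.card_pos.mp (by omega)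
    obtain ⟨⟨k, c⟩, hx⟩ := this
    rw [hS, mem_sdiff_iff] at hx
    exact ⟨k, (hmemT k).mpr (by omega)⟩
  set i := T.min' hTne with hidef
  set j := T.max' hTne with hjdef
  have hiT : i ∈ T := T.min'_mem hTne
  have hjT : j ∈ T := T.max'_mem hTne
  have hij : i ≤ j := T.min'_le j hjT
  have hjN : j < N - 1 := hTlt j hjT
  have hi' := (hmemT i).mp hiT
  have hj' := (hmemT j).mp hjT
  -- touched rows form an interval
  have hTivl : ∀ k, i ≤ k → k ≤ j → ν.rowLen k < μ.rowLen k := by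
    intro k hik hkj
    have ha : ((i, ν.rowLen i) : ℕ × ℕ) ∈ S := by rw [hS, mem_sdiff_iff]; omega
    have hb : ((j, ν.rowLen j) : ℕ × ℕ) ∈ S := by rw [hS, mem_sdiff_iff]; omega
    have hpath := hconn _ ha _ hb
    obtain ⟨c, hc⟩ := path_row_ivl hpath ha k hik hkj
    rw [hS, mem_sdiff_iff] at hc
    omega
  -- rim bound
  have hrimb : ∀ k, ν.rowLen k < μ.rowLen k → μ.rowLen (k + 1) ≤ ν.rowLen k + 1 := by
    intro k hk
    have ha : ((k, ν.rowLen k) : ℕ × ℕ) ∈ S := by rw [hS, mem_sdiff_iff]; omega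
    have := hrim ha
    rw [YoungDiagram.rim, Finset.mem_filter] at this
    have hnm : ((k + 1, ν.rowLen k + 1) : ℕ × ℕ) ∉ μ := by
      rw [← YoungDiagram.mem_cells]; exact this.2
    rw [YoungDiagram.mem_iff_lt_rowLen] at hnm
    omega
  -- crossing: middle rows
  have hmid : ∀ k, i ≤ k → k < j → μ.rowLen (k + 1) = ν.rowLen k + 1 := by
    intro k hik hkj
    have hk : ν.rowLen k < μ.rowLen k := hTivl k hik (by omega)
    have hk1 : ν.rowLen (k + 1) < μ.rowLen (k + 1) := hTivl (k + 1) (by omega) (by omega)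
    have ha : ((k, ν.rowLen k) : ℕ × ℕ) ∈ S := by rw [hS, mem_sdiff_iff]; omega
    have hb : ((k + 1, ν.rowLen (k + 1)) : ℕ × ℕ) ∈ S := by rw [hS, mem_sdiff_iff]; omega
    have hpath := hconn _ ha _ hb
    obtain ⟨c, hc1, hc2⟩ := path_cross hpath ha k (le_refl k) (le_refl (k + 1))
    rw [hS, mem_sdiff_iff] at hc1 hc2
    have := hrimb k hk
    omega
  -- rows off the interval are unchanged
  have hoff : ∀ k, k < i ∨ j < k → μ.rowLen k = ν.rowLen k := by
    intro k hk
    have hkT : k ∉ T := by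
      intro hkT
      rcases hk with hk | hk
      · have := T.min'_le k hkT; omega
      · have := T.le_max' k hkT; omega
    rw [hmemT] at hkT
    have := hle k
    omega
  -- cardinality / sum bookkeeping
  have hcards : ν.cells.card + p = μ.cells.card := by
    have h1 : S.card = μ.cells.card - ν.cells.card := Finset.card_sdiff_of_subset hsub
    have h2 : ν.cells.card ≤ μ.cells.card := Finset.card_le_card hsub
    omega
  have hsums : (∑ k ∈ Finset.range N, ν.rowLen k) + p = ∑ k ∈ Finset.range N, μ.rowLen k := by
    rw [← card_eq_sum hN, ← card_eq_sum (hN.mono hsub)]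
    exact hcards
  have hkey : (∑ k ∈ Finset.range N, μ.rowLen k) + ν.rowLen j
      = (∑ k ∈ Finset.range N, ν.rowLen k) + μ.rowLen i + (j - i) :=
    sum_key (f := fun k => μ.rowLen k) (g := fun k => ν.rowLen k) (N := N)
      hij (by omega) (fun k hk => hoff k hk) hmid
  -- β i μ = p + β j ν
  have hbeta : beta N μ i = p + beta N ν j := by
    unfold beta
    have e1 : N - 1 - i = (N - 1 - j) + (j - i) := by omega
    omega
  refine ⟨i, by omega, by omega, ?_, ?_⟩
  -- relations between beta values
  · -- beta N μ i - p ∉ betaSet N μ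
    have hbmj : beta N μ i - p = beta N ν j := by omega
    intro hmem
    rw [betaSet, Finset.mem_image] at hmem
    obtain ⟨m, hm, hmeq⟩ := hmem
    rw [Finset.mem_range] at hm
    rcases lt_trichotomy m i with hmi | hmi | hmi
    · have := beta_strict (N := N) μ hmi (by omega)
      omega
    · rw [hmi] at hmeq; omega
    · rcases le_or_gt m j with hmj | hmj
      · -- i < m ≤ j : beta μ m = beta ν (m-1)
        have hm1 : μ.rowLen ((m - 1) + 1) = ν.rowLen (m - 1) + 1 := hmid (m - 1) (by omega) (by omega)
        have e : (m - 1) + 1 = m := by omega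
        rw [e] at hm1
        have hbm : beta N μ m = beta N ν (m - 1) := by unfold beta; omega
        have : beta N ν j < beta N ν (m - 1) := beta_strict (N := N) ν (by omega) (by omega)
        omega
      · -- j < m
        have : beta N μ m = beta N ν m := by
          have := hoff m (Or.inr hmj); unfold beta; omega
        have : beta N ν m < beta N ν j := beta_strict (N := N) ν (by omega) (by omega)
        have := hoff m (Or.inr hmj)
        unfold beta at *
        omega
  · -- the betaSet relation
    ext x
    simp only [betaSet, Finset.mem_insert, Finset.mem_erase, Finset.mem_image, Finset.mem_range]
    constructor
    · rintro ⟨k, hk, rfl⟩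
      rcases lt_trichotomy k j with hkj | rfl | hkj
      · rcases lt_or_ge k i with hki | hki
        · -- unchanged row
          have he : beta N ν k = beta N μ k := by
            have := hoff k (Or.inl hki); unfold beta; omega
          refine Or.inr ⟨?_, k, hk, he.symm⟩
          rw [he]
          intro hcontra
          have := beta_inj μ hk (by omega) hcontra
          omega
        · -- middle row: beta ν k = beta μ (k+1)
          have hm1 := hmid k hki hkj
          have he : beta N ν k = beta N μ (k + 1) := by unfold beta; omega
          refine Or.inr ⟨?_, k + 1, by omega, he.symm⟩
          rw [he]
          intro hcontra
          have := beta_inj μ (by omega) (by omega) hcontra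
          omega
      · exact Or.inl (by omega)
      · have he : beta N ν k = beta N μ k := by
          have := hoff k (Or.inr hkj); unfold beta; omega
        refine Or.inr ⟨?_, k, hk, he.symm⟩
        rw [he]
        intro hcontra
        have := beta_inj μ hk (by omega) hcontra
        omega
    · rintro (rfl | ⟨hne, k, hk, rfl⟩)
      · exact ⟨j, by omega, by omega⟩
      · have hki : k ≠ i := by
          intro hcontra; subst hcontra; omega
        rcases lt_or_ge k i with h1 | h1
        · exact ⟨k, hk, by have := hoff k (Or.inl h1); unfold beta; omega⟩
        · rcases le_or_gt k j with h2 | h2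
          · -- i < k ≤ j
            have hm1 : μ.rowLen ((k - 1) + 1) = ν.rowLen (k - 1) + 1 :=
              hmid (k - 1) (by omega) (by omega)
            have e : (k - 1) + 1 = k := by omega
            rw [e] at hm1
            exact ⟨k - 1, by omega, by unfold beta; omega⟩
          · exact ⟨k, hk, by have := hoff k (Or.inr h2); unfold beta; omega⟩

end PCoreAux

namespace PCoreAux

open Finset

theorem move_removal {p N : ℕ} {μ : YoungDiagram} (hp : 0 < p) (hN : Bnd N μ)
    {i : ℕ} (hiN : i < N) (hpb : p ≤ beta N μ i) (hnot : beta N μ i - p ∉ betaSet N μ) :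
    ∃ ν, IsRimHookRemoval p μ ν := by
  set b := beta N μ i with hb
  -- the last row of the hook
  set J : Finset ℕ := (Finset.range N).filter (fun k => b - p < beta N μ k) with hJ
  have hiJ : i ∈ J := by
    rw [hJ, Finset.mem_filter, Finset.mem_range]
    exact ⟨hiN, by omega⟩
  have hJne : J.Nonempty := ⟨i, hiJ⟩
  set j := J.max' hJne with hjdef
  have hjJ : j ∈ J := J.max'_mem hJne
  have hij : i ≤ j := J.le_max' i hiJ
  have hjN : j < N := by
    have := hjJ; rw [hJ, Finset.mem_filter, Finset.mem_range] at this; exact this.1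
  have hjb : b - p < beta N μ j := by
    have := hjJ; rw [hJ, Finset.mem_filter] at this; exact this.2
  have hjN1 : j < N - 1 := by
    by_contra hcon
    have h0 : μ.rowLen j = 0 := hN j (by omega)
    have : beta N μ j = 0 := by unfold beta; omega
    omega
  have hj1 : beta N μ (j + 1) < b - p := by
    have h1 : j + 1 ∉ J := by
      intro hmem
      have := J.le_max' (j + 1) hmem
      omega
    rw [hJ, Finset.mem_filter, Finset.mem_range] at h1
    push_neg at h1
    have h2 := h1 (by omega)
    have h3 : beta N μ (j + 1) ≠ b - p := by
      intro hcon
      exact hnot (by rw [← hcon, betaSet]; exact Finset.mem_image_of_mem _ (by simp; omega))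
    omega
  have hNj : N - 1 - j ≤ b - p := by
    have : beta N μ (j + 1) = μ.rowLen (j + 1) + (N - 1 - (j + 1)) := rfl
    omega
  set x := b - p - (N - 1 - j) with hx
  have hxe : x + (N - 1 - j) = b - p := by omega
  have hbi : b = μ.rowLen i + (N - 1 - i) := rfl
  have hbj : beta N μ j = μ.rowLen j + (N - 1 - j) := rfl
  have hbj1 : beta N μ (j + 1) = μ.rowLen (j + 1) + (N - 1 - (j + 1)) := rfl
  have hμj : 1 ≤ μ.rowLen j := by omega
  have hxμj : x < μ.rowLen j := by omega
  have hμj1 : μ.rowLen (j + 1) ≤ x := by omega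
  have hμpos : ∀ k, i ≤ k → k ≤ j → 1 ≤ μ.rowLen k := by
    intro k _ hk
    have := μ.rowLen_anti k j hk
    omega
  -- the new row lengths
  set f : ℕ → ℕ := fun k =>
    if k < i then μ.rowLen k else if k < j then μ.rowLen (k + 1) - 1
    else if k = j then x else μ.rowLen k with hf
  have hfoff : ∀ k, k < i ∨ j < k → f k = μ.rowLen k := by
    intro k hk
    rw [hf]
    rcases hk with hk | hk
    · simp [hk]
    · have h1 : ¬ k < i := by omega
      have h2 : ¬ k < j := by omega
      have h3 : k ≠ j := by omega
      simp [h1, h2, h3]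
  have hfmid : ∀ k, i ≤ k → k < j → f k = μ.rowLen (k + 1) - 1 := by
    intro k hk1 hk2
    rw [hf]
    have h1 : ¬ k < i := by omega
    simp [h1, hk2]
  have hfj : f j = x := by
    rw [hf]
    have h1 : ¬ j < i := by omega
    have h2 : ¬ j < j := by omega
    simp [h1, h2]
  have hfle : ∀ k, f k ≤ μ.rowLen k := by
    intro k
    rcases lt_or_ge k i with h1 | h1
    · rw [hfoff k (Or.inl h1)]
    · rcases lt_or_ge k j with h2 | h2
      · rw [hfmid k h1 h2]
        have := μ.rowLen_anti k (k + 1) (by omega)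
        omega
      · rcases eq_or_lt_of_le h2 with heq | h3
        · rw [← heq, hfj]; omega
        · rw [hfoff k (Or.inr h3)]
  have htouch : ∀ k, i ≤ k → k ≤ j → f k < μ.rowLen k := by
    intro k hk1 hk2
    rcases lt_or_ge k j with h2 | h2
    · rw [hfmid k hk1 h2]
      have h3 := μ.rowLen_anti k (k + 1) (by omega)
      have h4 := hμpos k hk1 hk2
      omega
    · have hkj : k = j := by omega
      rw [hkj, hfj]; omega
  have hmidμ : ∀ k, i ≤ k → k < j → μ.rowLen (k + 1) = f k + 1 := by
    intro k hk1 hk2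
    rw [hfmid k hk1 hk2]
    have := hμpos (k + 1) (by omega) (by omega)
    omega
  have hstep : ∀ k, f (k + 1) ≤ f k := by
    intro k
    rcases lt_or_ge (k + 1) i with h1 | h1
    · rw [hfoff k (Or.inl (by omega)), hfoff (k + 1) (Or.inl h1)]
      exact μ.rowLen_anti k (k + 1) (by omega)
    · rcases lt_or_ge k j with h2 | h2
      · -- k < j, k+1 ≥ i
        have hk1j : k + 1 ≤ j := by omega
        have hub : f (k + 1) ≤ μ.rowLen (k + 1) - 1 := by
          rcases lt_or_ge (k + 1) j with h3 | h3
          · rw [hfmid (k + 1) h1 h3]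
            have := μ.rowLen_anti (k + 1) (k + 1 + 1) (by omega)
            have := hμpos (k + 1 + 1) (by omega) (by omega)
            omega
          · have : k + 1 = j := by omega
            rw [this, hfj]
            have := htouch j (by omega) (by omega)
            rw [hfj] at this
            omega
        rcases lt_or_ge k i with h4 | h4
        · rw [hfoff k (Or.inl h4)]
          have := μ.rowLen_anti k (k + 1) (by omega)
          omega
        · rw [hfmid k h4 h2]
          have := μ.rowLen_anti k (k + 1) (by omega)
          omega
      · rcases eq_or_lt_of_le h2 with heq | h3
        · rw [← heq, hfj, hfoff (j + 1) (Or.inr (by omega))]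
          exact hμj1
        · rw [hfoff k (Or.inr h3), hfoff (k + 1) (Or.inr (by omega))]
          exact μ.rowLen_anti k (k + 1) (by omega)
  have hanti : ∀ k l, k ≤ l → f l ≤ f k := by
    intro k l hkl
    induction l with
    | zero => have : k = 0 := by omega
              subst this; omega
    | succ n ih =>
      rcases Nat.eq_or_lt_of_le hkl with rfl | hlt
      · omega
      · exact le_trans (hstep n) (ih (by omega))
  -- construct ν
  set ν : YoungDiagram :=
    { cells := μ.cells.filter fun c => c.2 < f c.1
      isLowerSet := by
        intro a c hca hc
        simp only [Finset.coe_filter, Set.mem_setOf_eq, YoungDiagram.mem_cells] at hc ⊢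
        obtain ⟨h1, h2⟩ := hca
        refine ⟨μ.isLowerSet ⟨h1, h2⟩ hc.1, ?_⟩
        have := hanti c.1 a.1 h1
        omega } with hν
  have hνmem : ∀ k c, ((k, c) ∈ ν.cells) ↔ c < f k := by
    intro k c
    rw [hν]
    simp only [Finset.mem_filter, YoungDiagram.mem_cells]
    constructor
    · tauto
    · intro h
      refine ⟨?_, h⟩
      rw [YoungDiagram.mem_iff_lt_rowLen]
      have := hfle k
      omega
  have hνrow : ∀ k, ν.rowLen k = f k := by
    intro k
    have h1 := hνmem k (f k)
    have h2 := hνmem k (ν.rowLen k)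
    rw [YoungDiagram.mem_cells, YoungDiagram.mem_iff_lt_rowLen] at h1 h2
    omega
  have hsubν : ν.cells ⊆ μ.cells := by rw [hν]; exact Finset.filter_subset _ _
  have hSmem : ∀ k c, ((k, c) ∈ μ.cells \ ν.cells) ↔ f k ≤ c ∧ c < μ.rowLen k := by
    intro k c
    rw [mem_sdiff_iff, hνrow]
  have hSrows : ∀ k c, ((k, c) ∈ μ.cells \ ν.cells) → i ≤ k ∧ k ≤ j := by
    intro k c hkc
    rw [hSmem] at hkc
    constructor
    · by_contra h1
      rw [hfoff k (Or.inl (by omega))] at hkc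
      omega
    · by_contra h1
      rw [hfoff k (Or.inr (by omega))] at hkc
      omega
  refine ⟨ν, hsubν, ?_, ?_, ?_⟩
  · -- cardinality
    have hBν : Bnd N ν := hN.mono hsubν
    have hkey : (∑ k ∈ Finset.range N, μ.rowLen k) + f j
        = (∑ k ∈ Finset.range N, f k) + μ.rowLen i + (j - i) :=
      sum_key (N := N) hij (by omega) (fun k hk => (hfoff k hk).symm) hmidμ
    have hsum1 : μ.cells.card = ∑ k ∈ Finset.range N, μ.rowLen k := card_eq_sum hN
    have hsum2 : ν.cells.card = ∑ k ∈ Finset.range N, f k := by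
      rw [card_eq_sum hBν]
      exact Finset.sum_congr rfl fun k _ => hνrow k
    have hcard0 : (μ.cells \ ν.cells).card = μ.cells.card - ν.cells.card :=
      Finset.card_sdiff_of_subset hsubν
    have hle' : ν.cells.card ≤ μ.cells.card := Finset.card_le_card hsubν
    have harith : μ.rowLen i + (j - i) = p + x := by omega
    rw [hfj] at hkey
    omega
  · -- rim
    intro c hc
    obtain ⟨k, cc⟩ := c
    have hrows := hSrows k cc hc
    rw [hSmem] at hc
    rw [YoungDiagram.rim, Finset.mem_filter]
    refine ⟨by rw [YoungDiagram.mem_cells, YoungDiagram.mem_iff_lt_rowLen]; exact hc.2, ?_⟩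
    rw [YoungDiagram.mem_cells, YoungDiagram.mem_iff_lt_rowLen]
    simp only [not_lt]
    rcases lt_or_ge k j with h2 | h2
    · have := hmidμ k hrows.1 h2
      omega
    · have hkj : k = j := by omega
      rw [hkj, hfj] at hc
      rw [hkj]
      have := μ.rowLen_anti (j + 1) (j + 1) (by omega)
      omega
  · -- connectivity
    set S := μ.cells \ ν.cells with hSdef
    have hrowpath : ∀ k c d, (k, c) ∈ S → (k, d) ∈ S → c ≤ d →
        Relation.ReflTransGen (fun x y => y ∈ S ∧ Adj x y) (k, c) (k, d) := by
      intro k c d hc hd hcd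
      obtain ⟨e, rfl⟩ : ∃ e, d = c + e := ⟨d - c, by omega⟩
      clear hcd
      induction e with
      | zero => exact Relation.ReflTransGen.refl
      | succ n ih =>
        have hmidc : (k, c + n) ∈ S := by
          rw [hSmem] at hc hd ⊢
          omega
        exact Relation.ReflTransGen.tail (ih hmidc)
          ⟨hd, Or.inl ⟨rfl, Or.inr rfl⟩⟩
    have hcorner : ∀ k, i ≤ k → k ≤ j → (k, f k) ∈ S := by
      intro k h1 h2
      rw [hSmem]
      exact ⟨le_refl _, htouch k h1 h2⟩
    have hdown : ∀ d, i + d ≤ j →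
        Relation.ReflTransGen (fun x y => y ∈ S ∧ Adj x y) (i + d, f (i + d)) (i, f i) := by
      intro d
      induction d with
      | zero => intro _; exact Relation.ReflTransGen.refl
      | succ n ih =>
        intro hd
        set k := i + n with hk
        have hkj : k < j := by omega
        have h1 : (k + 1, f (k + 1)) ∈ S := hcorner (k + 1) (by omega) (by omega)
        have h2 : (k + 1, μ.rowLen (k + 1) - 1) ∈ S := by
          rw [hSmem]
          have := htouch (k + 1) (by omega) (by omega)
          have := hμpos (k + 1) (by omega) (by omega)
          omega
        have h3 : (k, f k) ∈ S := hcorner k (by omega) (by omega)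
        have hfk : f k = μ.rowLen (k + 1) - 1 := hfmid k (by omega) hkj
        have p1 := hrowpath (k + 1) (f (k + 1)) (μ.rowLen (k + 1) - 1) h1 h2
          (by have := htouch (k + 1) (by omega) (by omega); omega)
        have p2 : Relation.ReflTransGen (fun x y => y ∈ S ∧ Adj x y)
            (k + 1, μ.rowLen (k + 1) - 1) (k, f k) := by
          refine Relation.ReflTransGen.single ⟨h3, Or.inr ⟨?_, Or.inl rfl⟩⟩
          simp [hfk]
        have e1 : i + (n + 1) = k + 1 := by omega
        rw [e1]
        exact ((p1.trans p2).trans (ih (by omega)))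
    have hto : ∀ a ∈ S, Relation.ReflTransGen (fun x y => y ∈ S ∧ Adj x y) a (i, f i) := by
      intro a ha
      obtain ⟨k, c⟩ := a
      have hrows := hSrows k c ha
      have h1 : (k, f k) ∈ S := hcorner k hrows.1 hrows.2
      have hfc : f k ≤ c := by rw [hSmem] at ha; exact ha.1
      have p1 := path_rev (hrowpath k (f k) c h1 ha hfc) h1
      obtain ⟨d, rfl⟩ : ∃ d, k = i + d := ⟨k - i, by omega⟩
      exact p1.trans (hdown d (by omega))
    intro a ha bb hbb
    have p1 := hto a ha
    have p2 := path_rev (hto bb hbb) hbb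
    exact p1.trans p2

end PCoreAux

namespace PCoreAux

open Finset

/-- The beta set determines the diagram. -/
lemma betaSet_inj {N : ℕ} {μ ν : YoungDiagram} (hμ : Bnd N μ) (hν : Bnd N ν)
    (h : betaSet N μ = betaSet N ν) : μ = ν := by
  have hcount : ∀ (ρ : YoungDiagram) (k t : ℕ), k < N →
      (t ≤ beta N ρ k ↔ k + 1 ≤ ((betaSet N ρ).filter (fun x => t ≤ x)).card) := by
    intro ρ k t hk
    set F : Finset ℕ := (Finset.range N).filter (fun l => t ≤ beta N ρ l) with hF
    have hdc : ∀ l, l + 1 ∈ F → l ∈ F := by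
      intro l hl
      rw [hF, Finset.mem_filter, Finset.mem_range] at hl ⊢
      have := beta_strict (N := N) ρ (show l < l + 1 by omega) hl.1
      exact ⟨by omega, by omega⟩
    have hrange : F = Finset.range F.card := dc_eq_range F hdc
    have himg : (betaSet N ρ).filter (fun x => t ≤ x) = F.image (beta N ρ) := by
      ext x
      simp only [betaSet, Finset.mem_filter, Finset.mem_image, hF, Finset.mem_range]
      constructor
      · rintro ⟨⟨l, hl, rfl⟩, ht⟩; exact ⟨l, ⟨hl, ht⟩, rfl⟩
      · rintro ⟨l, ⟨hl, ht⟩, rfl⟩; exact ⟨⟨l, hl, rfl⟩, ht⟩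
    have hcardF : (F.image (beta N ρ)).card = F.card := by
      apply Finset.card_image_of_injOn
      intro a ha b hb hab
      simp only [Finset.mem_coe, hF, Finset.mem_filter, Finset.mem_range] at ha hb
      exact beta_inj ρ ha.1 hb.1 hab
    rw [himg, hcardF]
    constructor
    · intro ht
      have : k ∈ F := by rw [hF, Finset.mem_filter, Finset.mem_range]; exact ⟨hk, ht⟩
      rw [hrange, Finset.mem_range] at this
      omega
    · intro hcard
      have : k ∈ F := by rw [hrange, Finset.mem_range]; omega
      rw [hF, Finset.mem_filter] at this
      exact this.2
  have hbeq : ∀ k, k < N → beta N μ k = beta N ν k := by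
    intro k hk
    have h1 := (hcount μ k (beta N ν k) hk)
    have h2 := (hcount ν k (beta N ν k) hk)
    have h3 := (hcount μ k (beta N μ k) hk)
    have h4 := (hcount ν k (beta N μ k) hk)
    rw [h] at h1 h3
    omega
  have hrow : ∀ k, μ.rowLen k = ν.rowLen k := by
    intro k
    rcases lt_or_ge k (N - 1) with h1 | h1
    · have := hbeq k (by omega)
      unfold beta at this
      omega
    · rw [hμ k h1, hν k h1]
  ext ⟨k, c⟩
  rw [YoungDiagram.mem_cells, YoungDiagram.mem_cells,
    YoungDiagram.mem_iff_lt_rowLen, YoungDiagram.mem_iff_lt_rowLen, hrow]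

/-- Characterisation of `p`-cores via beta sets. -/
lemma core_iff {p N : ℕ} {μ : YoungDiagram} (hp : 0 < p) (hN : Bnd N μ) :
    IsPCore p μ ↔ ∀ b ∈ betaSet N μ, p ≤ b → b - p ∈ betaSet N μ := by
  constructor
  · intro hcore b hb hpb
    by_contra hnot
    rw [betaSet, Finset.mem_image] at hb
    obtain ⟨i, hi, rfl⟩ := hb
    rw [Finset.mem_range] at hi
    exact hcore (move_removal hp hN hi hpb hnot)
  · intro hclosed hcon
    obtain ⟨ν, hν⟩ := hcon
    obtain ⟨i, hiN, hpb, hnot, -⟩ := removal_beta hp hN hν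
    exact hnot (hclosed _ (Finset.mem_image_of_mem _ (Finset.mem_range.mpr hiN)) hpb)

/-- The invariant: the multiset of beta numbers mod `p`. -/
def res (p N : ℕ) (μ : YoungDiagram) : Multiset ℕ := (betaSet N μ).val.map (· % p)

lemma res_invariant {p N : ℕ} {μ ν : YoungDiagram} (hp : 0 < p) (hN : Bnd N μ)
    (h : IsRimHookRemoval p μ ν) : res p N ν = res p N μ := by
  obtain ⟨i, hiN, hpb, hnot, hset⟩ := removal_beta hp hN h
  have hbmem : beta N μ i ∈ betaSet N μ :=
    Finset.mem_image_of_mem _ (Finset.mem_range.mpr hiN)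
  set C := (betaSet N μ).erase (beta N μ i) with hC
  have h1 : betaSet N μ = insert (beta N μ i) C := (Finset.insert_erase hbmem).symm
  have hni : beta N μ i ∉ C := Finset.notMem_erase _ _
  have hnp : beta N μ i - p ∉ C := fun hmem => hnot (Finset.mem_of_mem_erase hmem)
  have hv1 : (betaSet N ν).val = (beta N μ i - p) ::ₘ C.val := by
    rw [hset]; exact Finset.insert_val_of_notMem hnp
  have hv2 : (betaSet N μ).val = (beta N μ i) ::ₘ C.val := by
    rw [h1]; exact Finset.insert_val_of_notMem hni
  have hmod : (beta N μ i - p) % p = beta N μ i % p := by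
    have heq : beta N μ i = (beta N μ i - p) + p := by omega
    conv_rhs => rw [heq]
    rw [Nat.add_mod_right]
  rw [res, res, hv1, hv2, Multiset.map_cons, Multiset.map_cons, hmod]

/-- Two `p`-cores with the same residues are equal. -/
lemma runner_eq {p : ℕ} (hp : 0 < p) (B₁ B₂ : Finset ℕ)
    (h1 : ∀ b ∈ B₁, p ≤ b → b - p ∈ B₁) (h2 : ∀ b ∈ B₂, p ≤ b → b - p ∈ B₂)
    (hres : B₁.val.map (· % p) = B₂.val.map (· % p)) : B₁ = B₂ := by
  have key : ∀ (B : Finset ℕ), (∀ b ∈ B, p ≤ b → b - p ∈ B) → ∀ x : ℕ,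
      (x ∈ B ↔ x / p + 1 ≤ (Multiset.map (· % p) B.val).count (x % p)) := by
    intro B hB x
    set Fl : Finset ℕ := B.filter (fun y => y % p = x % p) with hFl
    have hcnt : (Multiset.map (· % p) B.val).count (x % p) = Fl.card := by
      rw [Multiset.count_map]
      congr 1
      simp only [hFl, Finset.filter_val]
      congr 1
      ext y
      constructor <;> (intro hh; omega)
    set T : Finset ℕ := Fl.image (fun y => y / p) with hT
    have hinj : ∀ a ∈ Fl, ∀ b ∈ Fl, a / p = b / p → a = b := by
      intro a ha b hb hab
      rw [hFl, Finset.mem_filter] at ha hb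
      have ha' := Nat.div_add_mod a p
      have hb' := Nat.div_add_mod b p
      have e3 : p * (a / p) = p * (b / p) := by rw [hab]
      have : a % p = b % p := by omega
      omega
    have hcardT : T.card = Fl.card := Finset.card_image_of_injOn hinj
    have hdc : ∀ t, t + 1 ∈ T → t ∈ T := by
      intro t ht
      rw [hT, Finset.mem_image] at ht ⊢
      obtain ⟨y, hy, hyt⟩ := ht
      have hymem := hy
      rw [hFl, Finset.mem_filter] at hymem
      have hyp : p ≤ y := by
        have h4 : 1 ≤ y / p := by omega
        exact (Nat.one_le_div_iff hp).mp h4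
      refine ⟨y - p, ?_, ?_⟩
      · rw [hFl, Finset.mem_filter]
        have hmod : (y - p) % p = y % p := by
          have : y = (y - p) + p := by omega
          conv_rhs => rw [this]
          rw [Nat.add_mod_right]
        exact ⟨hB y hymem.1 hyp, by rw [hmod]; exact hymem.2⟩
      · have hdd := Nat.div_add_mod y p
        have h4 : 1 ≤ y / p := by omega
        have h45 : p ≤ p * (y / p) := Nat.le_mul_of_pos_right p h4
        have h5 : p * (y / p - 1) = p * (y / p) - p := by
          rw [Nat.mul_sub_one]
        have h3 : y - p = p * (y / p - 1) + y % p := by omega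
        rw [h3, Nat.mul_add_div hp, Nat.div_eq_of_lt (Nat.mod_lt _ hp)]
        omega
    have hrange : T = Finset.range T.card := dc_eq_range T hdc
    rw [hcnt]
    constructor
    · intro hx
      have : x / p ∈ T := by
        rw [hT, Finset.mem_image]
        exact ⟨x, by rw [hFl, Finset.mem_filter]; exact ⟨hx, rfl⟩, rfl⟩
      rw [hrange, Finset.mem_range] at this
      omega
    · intro hx
      have : x / p ∈ T := by rw [hrange, Finset.mem_range]; omega
      rw [hT, Finset.mem_image] at this
      obtain ⟨y, hy, hyx⟩ := this
      have hy' := hy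
      rw [hFl, Finset.mem_filter] at hy'
      have : y = x := by
        have e1 := Nat.div_add_mod y p
        have e2 := Nat.div_add_mod x p
        have e3 : p * (y / p) = p * (x / p) := by rw [hyx]
        have e4 := hy'.2
        omega
      rw [← this]
      exact hy'.1
  ext x
  rw [key B₁ h1 x, key B₂ h2 x, hres]

end PCoreAux

namespace PCoreAux

lemma chain {p N : ℕ} {μ c : YoungDiagram} (hp : 0 < p) (hN : Bnd N μ)
    (h : Relation.ReflTransGen (IsRimHookRemoval p) μ c) :
    Bnd N c ∧ res p N c = res p N μ := by
  induction h with
  | refl => exact ⟨hN, rfl⟩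
  | tail hab hstep ih =>
    obtain ⟨hB, hres⟩ := ih
    exact ⟨hB.mono hstep.1, by rw [res_invariant hp hB hstep, hres]⟩

end PCoreAux

/-- The `p`-core of a partition is well-defined: any two maximal sequences of
rim `p`-hook removals from `λ` terminate in the same partition. -/
theorem pCore_well_defined (p : ℕ) (hp : 0 < p) (lam c₁ c₂ : YoungDiagram)
    (h₁ : Relation.ReflTransGen (IsRimHookRemoval p) lam c₁) (hc₁ : IsPCore p c₁)
    (h₂ : Relation.ReflTransGen (IsRimHookRemoval p) lam c₂) (hc₂ : IsPCore p c₂) :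
    c₁ = c₂ := by
  set N := lam.colLen 0 + 1 with hNdef
  have hBnd : PCoreAux.Bnd N lam := by
    intro k hk
    have hk' : lam.colLen 0 ≤ k := by omega
    by_contra h0
    have h1 : (k, 0) ∈ lam := YoungDiagram.mem_iff_lt_rowLen.mpr (by omega)
    have h2 := YoungDiagram.mem_iff_lt_colLen.mp h1
    omega
  obtain ⟨hB1, hr1⟩ := PCoreAux.chain hp hBnd h₁
  obtain ⟨hB2, hr2⟩ := PCoreAux.chain hp hBnd h₂
  have hcl1 := (PCoreAux.core_iff hp hB1).mp hc₁
  have hcl2 := (PCoreAux.core_iff hp hB2).mp hc₂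
  apply PCoreAux.betaSet_inj hB1 hB2
  apply PCoreAux.runner_eq hp _ _ hcl1 hcl2
  exact hr1.trans hr2.symm
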